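/- Let 1 → C → E →^ρ G → 1 be a topological central extension of topological groups with C discrete, and suppose ρ admits a continuous section (group homomorphism splitting) η over an open subgroup U ≤ G and an abstract section ξ over a dense subgroup D ≤ G. If ξ and η agree on an open subgroup of a subgroup H ≤ D, then ξ restricted to H extends to a continuous section over the closure of H in G. -/

import Mathlib

/-- `s : G → E` is a (set-theoretic homomorphic) section of `ρ` over the subgroup `K`. -/
def IsSectionOn {E G : Type*} [Group E] [Group G] (ρ : E →* G) (s : G → E)
    (K : Subgroup G) : Prop :=
  (∀ x ∈ K, ρ (s x) = x) ∧ (∀ x ∈ K, ∀ y ∈ K, s (x * y) = s x * s y)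

/-- let `1 → C → E → G → 1` be a topological central extension with discrete
kernel, `η` a continuous section over an open subgroup `U ≤ G` and `ξ` an abstract section
over a dense subgroup `D ≤ G`.  If `ξ` and `η` agree on a (relatively) open subgroup `V` of a
subgroup `H ≤ D`, then `ξ` restricted to `H` extends to a continuous section over the closure
of `H` in `G`. -/
theorem section_extends_to_closure {E G : Type*}
    [Group E] [TopologicalSpace E] [IsTopologicalGroup E]
    [Group G] [TopologicalSpace G] [IsTopologicalGroup G]
    (ρ : E →* G) (hρcont : Continuous ρ) (hsurj : Function.Surjective ρ)
    (hcentral : ρ.ker ≤ Subgroup.center E) (hdisc : DiscreteTopology ρ.ker)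
    (U : Subgroup G) (hUopen : IsOpen (U : Set G))
    (η : G → E) (hη : IsSectionOn ρ η U) (hηcont : ContinuousOn η U)
    (D : Subgroup G) (hDdense : Dense (D : Set G))
    (ξ : G → E) (hξ : IsSectionOn ρ ξ D)
    (H : Subgroup G) (hHD : H ≤ D)
    (V : Subgroup G) (hVH : V ≤ H) (hVU : V ≤ U)
    (hVopen : ∃ W : Set G, IsOpen W ∧ (V : Set G) = (H : Set G) ∩ W)
    (hagree : ∀ v ∈ V, ξ v = η v) :
    ∃ s : G → E, IsSectionOn ρ s H.topologicalClosure ∧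
      ContinuousOn s (closure (H : Set G)) ∧ ∀ x ∈ H, s x = ξ x := by
  classical
  obtain ⟨W, hWopen, hVW⟩ := hVopen
  have h1W : (1:G) ∈ W := by
    have h1 : (1:G) ∈ (V : Set G) := V.one_mem
    rw [hVW] at h1; exact h1.2
  obtain ⟨N₀, hN₀open, hN₀1, hN₀mul⟩ :=
    exists_open_nhds_one_mul_subset
      (IsOpen.mem_nhds (hWopen.inter hUopen) ⟨h1W, U.one_mem⟩)
  set N : Set G := N₀ ∩ N₀⁻¹ with hNdef
  have hNopen : IsOpen N := hN₀open.inter hN₀open.inv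
  have hN1 : (1:G) ∈ N := ⟨hN₀1, by simpa using hN₀1⟩
  have hNsub : N ⊆ W ∩ (U : Set G) := by
    intro x hx
    have := hN₀mul (Set.mul_mem_mul hx.1 hN₀1)
    simpa using this
  have hNdiv : ∀ a ∈ N, ∀ b ∈ N, a * b⁻¹ ∈ W ∩ (U : Set G) := by
    intro a ha b hb
    exact hN₀mul (Set.mul_mem_mul ha.1 hb.2)
  -- η 1 = 1
  have hη1 : η 1 = 1 := by
    have := hη.2 1 U.one_mem 1 U.one_mem
    rw [mul_one] at this
    exact (left_eq_mul.mp this)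
  -- key well-definedness lemma
  have key : ∀ (x : G), ∀ h₁ ∈ H, ∀ h₂ ∈ H, h₁⁻¹ * x ∈ N → h₂⁻¹ * x ∈ N →
      ξ h₁ * η (h₁⁻¹ * x) = ξ h₂ * η (h₂⁻¹ * x) := by
    intro x h₁ hh₁ h₂ hh₂ hn₁ hn₂
    have hd : h₂⁻¹ * h₁ ∈ W ∩ (U : Set G) := by
      have h := hNdiv _ hn₂ _ hn₁
      have e : (h₂⁻¹ * x) * (h₁⁻¹ * x)⁻¹ = h₂⁻¹ * h₁ := by group
      rwa [e] at h
    have hVmem : h₂⁻¹ * h₁ ∈ V := by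
      rw [← SetLike.mem_coe, hVW]
      exact ⟨H.mul_mem (H.inv_mem hh₂) hh₁, hd.1⟩
    have hηmul : η (h₂⁻¹ * x) = η (h₂⁻¹ * h₁) * η (h₁⁻¹ * x) := by
      have h := hη.2 _ hd.2 _ (hNsub hn₁).2
      rw [← h]
      congr 1
      group
    have hξmul : ξ h₁ = ξ h₂ * ξ (h₂⁻¹ * h₁) := by
      have h := hξ.2 _ (hHD hh₂) _ (hHD (H.mul_mem (H.inv_mem hh₂) hh₁))
      rw [← h]
      congr 1
      group
    rw [hξmul, hηmul, hagree _ hVmem, mul_assoc]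
  -- existence of approximating h for points in the closure
  have hPmem : ∀ x ∈ closure (H : Set G), ∃ h, h ∈ H ∧ h⁻¹ * x ∈ N := by
    intro x hx
    have hO : IsOpen {h : G | h⁻¹ * x ∈ N} :=
      hNopen.preimage (by fun_prop)
    have hxO : x ∈ {h : G | h⁻¹ * x ∈ N} := by
      simp only [Set.mem_setOf_eq, inv_mul_cancel]
      exact hN1
    obtain ⟨h, hhO, hhH⟩ := mem_closure_iff.mp hx _ hO hxO
    exact ⟨h, hhH, hhO⟩
  -- the extension
  set P : G → Prop := fun x => ∃ h, h ∈ H ∧ h⁻¹ * x ∈ N with hPdef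
  set s : G → E := fun x =>
    if hx : P x then ξ hx.choose * η (hx.choose⁻¹ * x) else 1 with hsdef
  have sval : ∀ (x : G), ∀ h, h ∈ H → h⁻¹ * x ∈ N → s x = ξ h * η (h⁻¹ * x) := by
    intro x h hh hn
    have hP : P x := ⟨h, hh, hn⟩
    simp only [hsdef, dif_pos hP]
    exact key x _ hP.choose_spec.1 h hh hP.choose_spec.2 hn
  have sH : ∀ x ∈ H, s x = ξ x := by
    intro x hx
    rw [sval x x hx (by rw [inv_mul_cancel]; exact hN1)]
    rw [inv_mul_cancel, hη1, mul_one]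
  have hsρ : ∀ x ∈ closure (H : Set G), ρ (s x) = x := by
    intro x hx
    obtain ⟨h, hh, hn⟩ := hPmem x hx
    rw [sval x h hh hn, map_mul, hξ.1 _ (hHD hh), hη.1 _ ((hNsub hn).2)]
    group
  have hscont : ∀ x₀ ∈ closure (H : Set G), ContinuousAt s x₀ := by
    intro x₀ hx₀
    obtain ⟨h, hh, hn⟩ := hPmem x₀ hx₀
    have hg : ContinuousAt (fun x => ξ h * η (h⁻¹ * x)) x₀ := by
      have hηat : ContinuousAt η (h⁻¹ * x₀) :=
        hηcont.continuousAt (hUopen.mem_nhds ((hNsub hn).2))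
      exact continuousAt_const.mul (hηat.comp (by fun_prop))
    have hmem : {x : G | h⁻¹ * x ∈ N} ∈ nhds x₀ :=
      (hNopen.preimage (by fun_prop)).mem_nhds hn
    exact hg.congr (Filter.eventuallyEq_of_mem hmem fun x hx => (sval x h hh hx).symm)
  have hmulcl : ∀ x ∈ closure (H : Set G), ∀ y ∈ closure (H : Set G),
      x * y ∈ closure (H : Set G) := by
    intro x hx y hy
    have hx' : x ∈ H.topologicalClosure := hx
    have hy' : y ∈ H.topologicalClosure := hy
    exact mul_mem hx' hy'
  -- multiplicativity via local constancy of the discrete-kernel-valued defect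
  have hmul : ∀ x ∈ closure (H : Set G), ∀ y ∈ closure (H : Set G),
      s (x * y) = s x * s y := by
    intro x hx y hy
    set f : G × G → E := fun p => (s (p.1 * p.2))⁻¹ * (s p.1 * s p.2) with hfdef
    have hfker : ∀ p : G × G, p.1 ∈ closure (H : Set G) → p.2 ∈ closure (H : Set G) →
        f p ∈ ρ.ker := by
      intro p hp1 hp2
      rw [MonoidHom.mem_ker]
      simp only [hfdef, map_mul, map_inv]
      rw [hsρ _ (hmulcl _ hp1 _ hp2), hsρ _ hp1, hsρ _ hp2]
      group
    have hfcont : ContinuousAt f (x, y) := by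
      have h1 : ContinuousAt s x := hscont _ hx
      have h2 : ContinuousAt s y := hscont _ hy
      have hm : ContinuousAt (fun p : G × G => p.1 * p.2) (x, y) :=
        (continuous_fst.mul continuous_snd).continuousAt
      have h12 : ContinuousAt (s ∘ (fun p : G × G => p.1 * p.2)) (x, y) :=
        ContinuousAt.comp (hscont _ (hmulcl _ hx _ hy)) hm
      exact h12.inv.mul (show ContinuousAt (fun p : G × G => s p.1 * s p.2) (x, y) by
        have := (h1.comp (x := (x, y)) continuous_fst.continuousAt).mul
          (h2.comp (x := (x, y)) continuous_snd.continuousAt)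
        exact this)
    set c : E := f (x, y) with hcdef
    have hc : c ∈ ρ.ker := hfker _ hx hy
    obtain ⟨O, hOopen, hOspec⟩ :
        ∃ O : Set E, IsOpen O ∧ Subtype.val ⁻¹' O = ({⟨c, hc⟩} : Set ρ.ker) := by
      have h : IsOpen ({⟨c, hc⟩} : Set ρ.ker) := isOpen_discrete _
      rwa [isOpen_induced_iff] at h
    have hcO : c ∈ O := by
      have : (⟨c, hc⟩ : ρ.ker) ∈ Subtype.val ⁻¹' O := by rw [hOspec]; rfl
      exact this
    obtain ⟨Ω, hΩsub, hΩopen, hpΩ⟩ := mem_nhds_iff.mp (hfcont (hOopen.mem_nhds hcO))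
    have hxy : (x, y) ∈ closure ((H : Set G) ×ˢ (H : Set G)) := by
      rw [closure_prod_eq]; exact ⟨hx, hy⟩
    obtain ⟨q, hqΩ, hqH⟩ := mem_closure_iff.mp hxy _ hΩopen hpΩ
    have hfq1 : f q = 1 := by
      have hsm : s (q.1 * q.2) = s q.1 * s q.2 := by
        rw [sH _ (H.mul_mem hqH.1 hqH.2), sH _ hqH.1, sH _ hqH.2,
          hξ.2 _ (hHD hqH.1) _ (hHD hqH.2)]
      simp only [hfdef, hsm, mul_inv_rev]
      group
    have hfqc : f q = c := by
      have hqO : f q ∈ O := hΩsub hqΩ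
      have hqker : f q ∈ ρ.ker :=
        hfker _ (subset_closure hqH.1) (subset_closure hqH.2)
      have : (⟨f q, hqker⟩ : ρ.ker) ∈ Subtype.val ⁻¹' O := hqO
      rw [hOspec, Set.mem_singleton_iff] at this
      exact congrArg Subtype.val this
    have hc1 : c = 1 := by rw [← hfqc, hfq1]
    have : (s (x * y))⁻¹ * (s x * s y) = 1 := hc1
    exact (inv_mul_eq_one.mp this).symm ▸ rfl
  refine ⟨s, ⟨fun x hx => hsρ x hx, fun x hx y hy => hmul x hx y hy⟩,
    fun x hx => (hscont x hx).continuousWithinAt, sH⟩
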